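/- Let A, B be finite nonempty sets of integers with min A = min B = 0, max A = M, max B = N, M ≥ N, |A+B| = |A| + |B| - 1 + r, and h_A = |[0,M] \ A| ≤ |B| - 2. Define a hole x ∈ [0,N-1] \ B to be left stable if x ∉ A + B, and a hole x ∈ [1,N] \ B to be right stable if x + M ∉ A + B. Then the number of holes of B in [0,N] that are neither left nor right stable equals r - h_A, where h_A = |[0,M]\A|. -/
import Mathlib


open scoped Pointwise
open scoped Classical

theorem stmt6 (A B : Finset ℤ) (hA : A.Nonempty) (hB : B.Nonempty) (M N r : ℤ)
    (hminA : A.min' hA = 0) (hminB : B.min' hB = 0)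
    (hmaxA : A.max' hA = M) (hmaxB : B.max' hB = N) (hMN : N ≤ M)
    (hr : ((A + B).card : ℤ) = (A.card : ℤ) + (B.card : ℤ) - 1 + r)
    (hhole : ((Finset.Icc 0 M \ A).card : ℤ) ≤ (B.card : ℤ) - 2) :
    (((Finset.Icc 0 N \ B).filter (fun x =>
        ¬(x ∈ Finset.Icc 0 (N - 1) ∧ x ∉ A + B) ∧
        ¬(x ∈ Finset.Icc 1 N ∧ x + M ∉ A + B))).card : ℤ)
      = r - ((Finset.Icc 0 M \ A).card : ℤ) := by
  classical
  have h0A : (0:ℤ) ∈ A := by rw [← hminA]; exact A.min'_mem hA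
  have h0B : (0:ℤ) ∈ B := by rw [← hminB]; exact B.min'_mem hB
  have hMA : M ∈ A := by rw [← hmaxA]; exact A.max'_mem hA
  have hNB : N ∈ B := by rw [← hmaxB]; exact B.max'_mem hB
  have hN0 : (0:ℤ) ≤ N := by rw [← hminB]; exact B.min'_le N hNB
  have hM0 : (0:ℤ) ≤ M := le_trans hN0 hMN
  have hAsub : A ⊆ Finset.Icc 0 M := by
    intro a ha
    rw [Finset.mem_Icc]
    exact ⟨by rw [← hminA]; exact A.min'_le a ha, by rw [← hmaxA]; exact A.le_max' a ha⟩
  have hBsub : B ⊆ Finset.Icc 0 N := by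
    intro b hb
    rw [Finset.mem_Icc]
    exact ⟨by rw [← hminB]; exact B.min'_le b hb, by rw [← hmaxB]; exact B.le_max' b hb⟩
  have memAB : ∀ a ∈ A, ∀ b ∈ B, a + b ∈ A + B := by
    intro a ha b hb
    exact Finset.mem_add.2 ⟨a, ha, b, hb, rfl⟩
  have hBAB : ∀ b ∈ B, b ∈ A + B := by
    intro b hb
    simpa using memAB 0 h0A b hb
  have hBABM : ∀ b ∈ B, b + M ∈ A + B := by
    intro b hb
    rw [add_comm b M]
    exact memAB M hMA b hb
  have hABsub : A + B ⊆ Finset.Icc 0 (M + N) := by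
    intro x hx
    obtain ⟨a, ha, b, hb, rfl⟩ := Finset.mem_add.1 hx
    have ha' := Finset.mem_Icc.1 (hAsub ha)
    have hb' := Finset.mem_Icc.1 (hBsub hb)
    rw [Finset.mem_Icc]; omega
  -- middle interval [N, M] is contained in A + B
  have key : ∀ y : ℤ, N ≤ y → y ≤ M → y ∈ A + B := by
    intro y hyN hyM
    by_contra hy
    have hsub : B.image (fun b => y - b) ⊆ Finset.Icc 0 M \ A := by
      intro t ht
      obtain ⟨b, hb, rfl⟩ := Finset.mem_image.1 ht
      have hb' := Finset.mem_Icc.1 (hBsub hb)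
      rw [Finset.mem_sdiff, Finset.mem_Icc]
      refine ⟨⟨by omega, by omega⟩, fun hmem => hy ?_⟩
      have := memAB _ hmem b hb
      simpa using this
    have hinj : Function.Injective (fun b : ℤ => y - b) := by
      intro a b h
      simp only at h
      omega
    have h1 : B.card ≤ (Finset.Icc 0 M \ A).card := by
      rw [← Finset.card_image_of_injective B hinj]
      exact Finset.card_le_card hsub
    have h1' : (B.card : ℤ) ≤ ((Finset.Icc 0 M \ A).card : ℤ) := by exact_mod_cast h1
    linarith
  -- no hole of B is both left and right stable
  have nodouble : ∀ x : ℤ, 1 ≤ x → x ≤ N - 1 → x ∉ A + B → x + M ∉ A + B → False := by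
    intro x hx1 hxN hxL hxR
    have hT1 : (B.filter (fun b => b ≤ x)).image (fun b => x - b) ⊆ Finset.Icc 0 M \ A := by
      intro t ht
      obtain ⟨b, hb, rfl⟩ := Finset.mem_image.1 ht
      rw [Finset.mem_filter] at hb
      have hb' := Finset.mem_Icc.1 (hBsub hb.1)
      rw [Finset.mem_sdiff, Finset.mem_Icc]
      refine ⟨⟨by omega, by omega⟩, fun hmem => hxL ?_⟩
      have := memAB _ hmem b hb.1
      simpa using this
    have hT2 : (B.filter (fun b => ¬ b ≤ x)).image (fun b => x + M - b) ⊆ Finset.Icc 0 M \ A := by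
      intro t ht
      obtain ⟨b, hb, rfl⟩ := Finset.mem_image.1 ht
      rw [Finset.mem_filter] at hb
      have hb' := Finset.mem_Icc.1 (hBsub hb.1)
      have hbx : x < b := by omega
      rw [Finset.mem_sdiff, Finset.mem_Icc]
      refine ⟨⟨by omega, by omega⟩, fun hmem => hxR ?_⟩
      have := memAB _ hmem b hb.1
      simpa using this
    have hinter : ((B.filter (fun b => b ≤ x)).image (fun b => x - b)) ∩
        ((B.filter (fun b => ¬ b ≤ x)).image (fun b => x + M - b)) ⊆ {x} := by
      intro t ht
      rw [Finset.mem_inter] at ht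
      obtain ⟨b1, hb1, h1⟩ := Finset.mem_image.1 ht.1
      obtain ⟨b2, hb2, h2⟩ := Finset.mem_image.1 ht.2
      rw [Finset.mem_filter] at hb1 hb2
      have hb1' := Finset.mem_Icc.1 (hBsub hb1.1)
      have hb2' := Finset.mem_Icc.1 (hBsub hb2.1)
      have h1' : x - b1 = t := h1
      have h2' : x + M - b2 = t := h2
      have := hb1.2
      have := hb2.2
      rw [Finset.mem_singleton]
      omega
    have hcard1 : ((B.filter (fun b => b ≤ x)).image (fun b => x - b)).card
        = (B.filter (fun b => b ≤ x)).card := by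
      apply Finset.card_image_of_injective
      intro a b h
      simp only at h
      omega
    have hcard2 : ((B.filter (fun b => ¬ b ≤ x)).image (fun b => x + M - b)).card
        = (B.filter (fun b => ¬ b ≤ x)).card := by
      apply Finset.card_image_of_injective
      intro a b h
      simp only at h
      omega
    have hsplit : (B.filter (fun b => b ≤ x)).card + (B.filter (fun b => ¬ b ≤ x)).card
        = B.card := Finset.card_filter_add_card_filter_not _
    have hunion := Finset.card_union_add_card_inter
      ((B.filter (fun b => b ≤ x)).image (fun b => x - b))
      ((B.filter (fun b => ¬ b ≤ x)).image (fun b => x + M - b))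
    have hU : (((B.filter (fun b => b ≤ x)).image (fun b => x - b)) ∪
        ((B.filter (fun b => ¬ b ≤ x)).image (fun b => x + M - b))).card
        ≤ (Finset.Icc 0 M \ A).card := Finset.card_le_card (Finset.union_subset hT1 hT2)
    have hI : (((B.filter (fun b => b ≤ x)).image (fun b => x - b)) ∩
        ((B.filter (fun b => ¬ b ≤ x)).image (fun b => x + M - b))).card ≤ 1 := by
      have := Finset.card_le_card hinter
      simpa using this
    have hnat : B.card ≤ (Finset.Icc 0 M \ A).card + 1 := by omega
    have hnat' : (B.card : ℤ) ≤ ((Finset.Icc 0 M \ A).card : ℤ) + 1 := by exact_mod_cast hnat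
    linarith
  -- the stable-hole sets
  set SL := (Finset.Icc 0 (N-1)).filter (fun x => x ∉ A + B) with hSLdef
  set SR := (Finset.Icc 1 N).filter (fun x => x + M ∉ A + B) with hSRdef
  -- split the holes of B into unstable and stable parts
  have hsplitF := Finset.card_filter_add_card_filter_not
    (s := Finset.Icc 0 N \ B)
    (p := fun x => ¬(x ∈ Finset.Icc 0 (N - 1) ∧ x ∉ A + B) ∧
        ¬(x ∈ Finset.Icc 1 N ∧ x + M ∉ A + B))
  have hstable : (Finset.Icc 0 N \ B).filter (fun x =>
      ¬(¬(x ∈ Finset.Icc 0 (N - 1) ∧ x ∉ A + B) ∧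
        ¬(x ∈ Finset.Icc 1 N ∧ x + M ∉ A + B))) = SL ∪ SR := by
    ext x
    constructor
    · intro hx
      simp only [Finset.mem_filter] at hx
      obtain ⟨hxh, hq⟩ := hx
      rw [not_and_or, not_not, not_not] at hq
      rcases hq with h | h
      · exact Finset.mem_union_left _ (by simp only [hSLdef, Finset.mem_filter]; exact h)
      · exact Finset.mem_union_right _ (by simp only [hSRdef, Finset.mem_filter]; exact h)
    · intro hx
      simp only [Finset.mem_union] at hx
      simp only [Finset.mem_filter]
      constructor
      · rw [Finset.mem_sdiff, Finset.mem_Icc]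
        rcases hx with h | h
        · simp only [hSLdef, Finset.mem_filter, Finset.mem_Icc] at h
          exact ⟨⟨h.1.1, by omega⟩, fun hxB => h.2 (hBAB x hxB)⟩
        · simp only [hSRdef, Finset.mem_filter, Finset.mem_Icc] at h
          exact ⟨⟨by omega, h.1.2⟩, fun hxB => h.2 (hBABM x hxB)⟩
      · rw [not_and_or, not_not, not_not]
        rcases hx with h | h
        · simp only [hSLdef, Finset.mem_filter] at h
          exact Or.inl h
        · simp only [hSRdef, Finset.mem_filter] at h
          exact Or.inr h
  have hdisj : Disjoint SL SR := by
    rw [Finset.disjoint_left]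
    intro x hx1 hx2
    simp only [hSLdef, hSRdef, Finset.mem_filter, Finset.mem_Icc] at hx1 hx2
    exact nodouble x hx2.1.1 hx1.1.2 hx1.2 hx2.2
  -- holes of A + B decompose as SL ∪ (SR + M)
  have hHS : Finset.Icc 0 (M+N) \ (A + B) = SL ∪ SR.image (fun x => x + M) := by
    ext t
    simp only [hSLdef, hSRdef, Finset.mem_sdiff, Finset.mem_union, Finset.mem_filter,
      Finset.mem_image, Finset.mem_Icc]
    constructor
    · rintro ⟨⟨h0, h1⟩, hAB⟩
      by_cases hc : t ≤ N - 1
      · exact Or.inl ⟨⟨h0, hc⟩, hAB⟩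
      · right
        have htM : M + 1 ≤ t := by
          by_contra hcon
          exact hAB (key t (by omega) (by omega))
        refine ⟨t - M, ⟨⟨by omega, by omega⟩, ?_⟩, by ring⟩
        simpa using hAB
    · rintro (⟨⟨h0, h1⟩, hAB⟩ | ⟨y, ⟨⟨hy1, hy2⟩, hyAB⟩, rfl⟩)
      · exact ⟨⟨h0, by omega⟩, hAB⟩
      · exact ⟨⟨by omega, by omega⟩, hyAB⟩
  have hdisj2 : Disjoint SL (SR.image (fun x => x + M)) := by
    rw [Finset.disjoint_left]
    intro t h1 h2
    simp only [hSLdef, hSRdef, Finset.mem_filter, Finset.mem_image, Finset.mem_Icc] at h1 h2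
    obtain ⟨y, ⟨⟨hy1, hy2⟩, _⟩, hyt⟩ := h2
    have := h1.1.2
    omega
  have hinj2 : (SR.image (fun x => x + M)).card = SR.card := by
    apply Finset.card_image_of_injective
    intro a b h
    simp only at h
    omega
  -- cardinality computations
  have csd : ∀ (a : ℤ) (X : Finset ℤ), 0 ≤ a → X ⊆ Finset.Icc 0 a →
      ((Finset.Icc 0 a \ X).card : ℤ) = a + 1 - X.card := by
    intro a X ha hsub
    have h1 : X.card ≤ (Finset.Icc 0 a).card := Finset.card_le_card hsub
    rw [Finset.card_sdiff_of_subset hsub, Nat.cast_sub h1, Int.card_Icc]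
    omega
  have eB := csd N B hN0 hBsub
  have eA := csd M A hM0 hAsub
  have eAB := csd (M+N) (A+B) (by omega) hABsub
  have c2 : ((Finset.Icc 0 (M+N) \ (A + B)).card : ℤ) = (SL.card : ℤ) + (SR.card : ℤ) := by
    rw [hHS, Finset.card_union_of_disjoint hdisj2, hinj2]
    push_cast
    ring
  have c1 : ((Finset.Icc 0 N \ B).filter (fun x =>
        ¬(x ∈ Finset.Icc 0 (N - 1) ∧ x ∉ A + B) ∧
        ¬(x ∈ Finset.Icc 1 N ∧ x + M ∉ A + B))).card
      + (SL.card + SR.card) = (Finset.Icc 0 N \ B).card := by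
    rw [← Finset.card_union_of_disjoint hdisj, ← hstable]
    exact hsplitF
  have c1' : (((Finset.Icc 0 N \ B).filter (fun x =>
        ¬(x ∈ Finset.Icc 0 (N - 1) ∧ x ∉ A + B) ∧
        ¬(x ∈ Finset.Icc 1 N ∧ x + M ∉ A + B))).card : ℤ)
      + ((SL.card : ℤ) + (SR.card : ℤ)) = ((Finset.Icc 0 N \ B).card : ℤ) := by
    exact_mod_cast c1
  linarith
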